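/- If K ⊆ F_2^n is a linear subspace with L_q + K = F_2^n and L_q ∩ K = {0}, then |Γ(K, z)|^2 = 2^n / |L_q| for every z ∈ F_2^n. -/

import Mathlib

open Finset

/-- The quadratic form q : F_2^n → Z_4. -/
def quadForm {n : ℕ} (A : Fin n → Fin n → ZMod 2) (b : Fin n → ZMod 2)
    (x : Fin n → ZMod 2) : ZMod 4 :=
  2 * ∑ p ∈ Finset.univ.filter (fun p : Fin n × Fin n => p.1 < p.2),
      ((A p.1 p.2).val : ZMod 4) * ((x p.1).val : ZMod 4) * ((x p.2).val : ZMod 4)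
  + ∑ α : Fin n, ((b α).val : ZMod 4) * ((x α).val : ZMod 4)

/-- The set L_q. -/
def Lset {n : ℕ} (A : Fin n → Fin n → ZMod 2) (b : Fin n → ZMod 2) :
    Set (Fin n → ZMod 2) :=
  {x | ∀ y, quadForm A b (x + y) = quadForm A b x + quadForm A b y}

/-- F_2 inner product. -/
def ip {n : ℕ} (z x : Fin n → ZMod 2) : ZMod 2 := ∑ α, z α * x α

/-- The partial Fourier transform Γ(L, z). -/
noncomputable def Gamma {n : ℕ} (A : Fin n → Fin n → ZMod 2) (b : Fin n → ZMod 2)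
    (L : Set (Fin n → ZMod 2)) (z : Fin n → ZMod 2) : ℂ :=
  ∑ x ∈ (Set.toFinite L).toFinset,
    (-1 : ℂ) ^ (ip z x).val * Complex.I ^ (quadForm A b x).val

def Bform {n : ℕ} (A : Fin n → Fin n → ZMod 2) (b : Fin n → ZMod 2)
    (x y : Fin n → ZMod 2) : ZMod 2 :=
  ∑ p ∈ Finset.univ.filter (fun p : Fin n × Fin n => p.1 < p.2),
      A p.1 p.2 * (x p.1 * y p.2 + x p.2 * y p.1)
  + ∑ α : Fin n, b α * x α * y α

/-- The additive hom a ↦ 2 * a.val from ZMod 2 to ZMod 4. -/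
def twoHom : ZMod 2 →+ ZMod 4 where
  toFun a := 2 * (a.val : ZMod 4)
  map_zero' := by decide
  map_add' := by decide

lemma twoHom_sum {ι : Type*} (s : Finset ι) (f : ι → ZMod 2) :
    2 * (((∑ i ∈ s, f i).val : ZMod 4)) = ∑ i ∈ s, 2 * ((f i).val : ZMod 4) :=
  map_sum twoHom f s

lemma quadForm_add {n : ℕ} (A : Fin n → Fin n → ZMod 2) (b : Fin n → ZMod 2)
    (x y : Fin n → ZMod 2) :
    quadForm A b (x + y)
      = quadForm A b x + quadForm A b y + 2 * ((Bform A b x y).val : ZMod 4) := by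
  unfold quadForm Bform
  have h2 : ∀ a : ZMod 2, (2 * ((a.val : ZMod 4)) : ZMod 4) = twoHom a := fun _ => rfl
  rw [h2, map_add, map_sum, map_sum]
  simp only [← h2]
  rw [Finset.mul_sum, Finset.mul_sum, Finset.mul_sum]
  have key1 : ∀ p ∈ Finset.univ.filter (fun p : Fin n × Fin n => p.1 < p.2),
      2 * (((A p.1 p.2).val : ZMod 4) * (((x + y) p.1).val : ZMod 4) * (((x + y) p.2).val : ZMod 4))
      = 2 * (((A p.1 p.2).val : ZMod 4) * ((x p.1).val : ZMod 4) * ((x p.2).val : ZMod 4))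
        + 2 * (((A p.1 p.2).val : ZMod 4) * ((y p.1).val : ZMod 4) * ((y p.2).val : ZMod 4))
        + 2 * (((A p.1 p.2 * (x p.1 * y p.2 + x p.2 * y p.1)).val : ZMod 4)) := by
    intro p _
    simp only [Pi.add_apply]
    generalize A p.1 p.2 = a; generalize x p.1 = x1; generalize x p.2 = x2
    generalize y p.1 = y1; generalize y p.2 = y2
    revert a x1 x2 y1 y2; decide
  have key2 : ∀ α ∈ (Finset.univ : Finset (Fin n)),
      ((b α).val : ZMod 4) * (((x + y) α).val : ZMod 4)
      = ((b α).val : ZMod 4) * ((x α).val : ZMod 4)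
        + ((b α).val : ZMod 4) * ((y α).val : ZMod 4)
        + 2 * (((b α * x α * y α).val : ZMod 4)) := by
    intro α _
    simp only [Pi.add_apply]
    generalize b α = c; generalize x α = x1; generalize y α = y1
    revert c x1 y1; decide
  rw [Finset.sum_congr rfl key1, Finset.sum_congr rfl key2]
  simp only [Finset.sum_add_distrib]
  ring

lemma quadForm_zero {n : ℕ} (A : Fin n → Fin n → ZMod 2) (b : Fin n → ZMod 2) :
    quadForm A b 0 = 0 := by
  simp [quadForm]

lemma ip_zero {n : ℕ} (z : Fin n → ZMod 2) : ip z 0 = 0 := by simp [ip]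

lemma ip_add {n : ℕ} (z x y : Fin n → ZMod 2) : ip z (x + y) = ip z x + ip z y := by
  simp [ip, mul_add, Finset.sum_add_distrib]

lemma Bform_comm {n : ℕ} (A : Fin n → Fin n → ZMod 2) (b : Fin n → ZMod 2)
    (x y : Fin n → ZMod 2) : Bform A b x y = Bform A b y x := by
  unfold Bform
  congr 1
  · exact Finset.sum_congr rfl fun p _ => by ring
  · exact Finset.sum_congr rfl fun α _ => by ring

lemma Bform_add_right {n : ℕ} (A : Fin n → Fin n → ZMod 2) (b : Fin n → ZMod 2)
    (x y z : Fin n → ZMod 2) :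
    Bform A b x (y + z) = Bform A b x y + Bform A b x z := by
  unfold Bform
  simp only [Pi.add_apply]
  rw [add_add_add_comm, ← Finset.sum_add_distrib, ← Finset.sum_add_distrib]
  congr 1
  · exact Finset.sum_congr rfl fun p _ => by ring
  · exact Finset.sum_congr rfl fun α _ => by ring

lemma Bform_add_left {n : ℕ} (A : Fin n → Fin n → ZMod 2) (b : Fin n → ZMod 2)
    (x y z : Fin n → ZMod 2) :
    Bform A b (x + y) z = Bform A b x z + Bform A b y z := by
  rw [Bform_comm, Bform_add_right, Bform_comm A b z x, Bform_comm A b z y]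

lemma Bform_zero_left {n : ℕ} (A : Fin n → Fin n → ZMod 2) (b : Fin n → ZMod 2)
    (y : Fin n → ZMod 2) : Bform A b 0 y = 0 := by
  simp [Bform]

lemma mem_Lset_iff {n : ℕ} (A : Fin n → Fin n → ZMod 2) (b : Fin n → ZMod 2)
    (x : Fin n → ZMod 2) : x ∈ Lset A b ↔ ∀ y, Bform A b x y = 0 := by
  constructor
  · intro h y
    have := h y
    rw [quadForm_add] at this
    have h2 : (2 : ZMod 4) * ((Bform A b x y).val : ZMod 4) = 0 := by
      linear_combination this
    generalize Bform A b x y = c at h2 ⊢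
    revert c; decide
  · intro h y
    rw [quadForm_add, h y]
    simp

lemma zero_mem_Lset {n : ℕ} (A : Fin n → Fin n → ZMod 2) (b : Fin n → ZMod 2) :
    (0 : Fin n → ZMod 2) ∈ Lset A b := by
  rw [mem_Lset_iff]
  intro y; exact Bform_zero_left A b y

lemma Lset_add {n : ℕ} (A : Fin n → Fin n → ZMod 2) (b : Fin n → ZMod 2)
    {x y : Fin n → ZMod 2} (hx : x ∈ Lset A b) (hy : y ∈ Lset A b) :
    x + y ∈ Lset A b := by
  rw [mem_Lset_iff] at hx hy ⊢
  intro w; rw [Bform_add_left, hx w, hy w, add_zero]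

-- complex power lemmas
lemma neg_one_pow_mod (k : ℕ) : ((-1 : ℂ)) ^ (k % 2) = (-1) ^ k := by
  conv_rhs => rw [← Nat.div_add_mod k 2]
  rw [pow_add, pow_mul]
  norm_num

lemma I_pow_mod (k : ℕ) : Complex.I ^ (k % 4) = Complex.I ^ k := by
  conv_rhs => rw [← Nat.div_add_mod k 4]
  rw [pow_add, pow_mul, Complex.I_pow_four, one_pow, one_mul]

lemma neg_one_pow_zmod2_add (a c : ZMod 2) :
    ((-1 : ℂ)) ^ ((a + c).val) = (-1) ^ a.val * (-1) ^ c.val := by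
  rw [ZMod.val_add, neg_one_pow_mod, pow_add]

lemma I_pow_zmod4_add (u v : ZMod 4) :
    Complex.I ^ ((u + v).val) = Complex.I ^ u.val * Complex.I ^ v.val := by
  rw [ZMod.val_add, I_pow_mod, pow_add]

lemma zmod2_cases (c : ZMod 2) : c = 0 ∨ c = 1 := by revert c; decide

lemma I_pow_two_mul (c : ZMod 2) :
    Complex.I ^ ((2 * ((c.val : ZMod 4))).val) = (-1 : ℂ) ^ c.val := by
  rcases zmod2_cases c with rfl | rfl
  · norm_num [show ((2 : ZMod 4) * ((ZMod.val (0 : ZMod 2) : ℕ) : ZMod 4)).val = 0 from rfl,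
      show ZMod.val (0 : ZMod 2) = 0 from rfl]
  · rw [show ((2 : ZMod 4) * ((ZMod.val (1 : ZMod 2) : ℕ) : ZMod 4)).val = 2 from rfl,
      show ZMod.val (1 : ZMod 2) = 1 from rfl, Complex.I_sq, pow_one]

lemma neg_one_sq_pow (m : ℕ) : ((-1 : ℂ)) ^ m * (-1) ^ m = 1 := by
  rw [← mul_pow]; norm_num

lemma I_negI_pow (m : ℕ) : Complex.I ^ m * (-Complex.I) ^ m = 1 := by
  rw [← mul_pow]; norm_num [Complex.I_mul_I]

/-- If K is a linear subspace with L_q + K = F_2^n and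
L_q ∩ K = {0}, then |Γ(K, z)|² = 2^n / |L_q| for every z. -/
theorem abs_sq_Gamma_K (n : ℕ) (hn : 1 ≤ n)
    (A : Fin n → Fin n → ZMod 2) (b : Fin n → ZMod 2)
    (K : Submodule (ZMod 2) (Fin n → ZMod 2))
    (hsum : ∀ v : Fin n → ZMod 2, ∃ x ∈ Lset A b, ∃ y ∈ K, v = x + y)
    (hint : Lset A b ∩ (K : Set (Fin n → ZMod 2)) = {0})
    (z : Fin n → ZMod 2) :
    (‖Gamma A b (K : Set (Fin n → ZMod 2)) z‖) ^ 2
      = 2 ^ n / (Nat.card ↥(Lset A b) : ℝ) := by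
  have char2 : ∀ v : Fin n → ZMod 2, v + v = 0 := by
    intro v; funext i
    simp only [Pi.add_apply, Pi.zero_apply]
    generalize v i = a
    revert a; decide
  set KF := (Set.toFinite (K : Set (Fin n → ZMod 2))).toFinset with hKFdef
  have memKF : ∀ x, x ∈ KF ↔ x ∈ K := by
    intro x; rw [hKFdef, Set.Finite.mem_toFinset]; rfl
  set f : (Fin n → ZMod 2) → ℂ :=
    fun x => (-1 : ℂ) ^ (ip z x).val * Complex.I ^ (quadForm A b x).val with hf
  -- reindexing lemma: for k ∈ K, summing g over KF equals summing g (· + k)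
  have reindex : ∀ (k : Fin n → ZMod 2), k ∈ K → ∀ g : (Fin n → ZMod 2) → ℂ,
      ∑ x ∈ KF, g x = ∑ x ∈ KF, g (x + k) := by
    intro k hk g
    refine Finset.sum_nbij' (fun x => x + k) (fun x => x + k) ?_ ?_ ?_ ?_ ?_
    · intro x hx; rw [memKF] at *; exact K.add_mem hx hk
    · intro x hx; rw [memKF] at *; exact K.add_mem hx hk
    · intro x _; show x + k + k = x; rw [add_assoc, char2 k, add_zero]
    · intro x _; show x + k + k = x; rw [add_assoc, char2 k, add_zero]
    · intro x _; show g x = g (x + k + k); rw [add_assoc, char2 k, add_zero]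
  -- pointwise identity
  have pointwise : ∀ w y : Fin n → ZMod 2,
      f (w + y) * (starRingEnd ℂ) (f y)
        = ((-1 : ℂ) ^ (ip z w).val * Complex.I ^ (quadForm A b w).val)
          * (-1 : ℂ) ^ (Bform A b w y).val := by
    intro w y
    have e1 : ((-1 : ℂ)) ^ (ip z (w + y)).val
        = (-1 : ℂ) ^ (ip z w).val * (-1 : ℂ) ^ (ip z y).val := by
      rw [ip_add]; exact neg_one_pow_zmod2_add _ _
    have e2 : Complex.I ^ (quadForm A b (w + y)).val
        = Complex.I ^ (quadForm A b w).val * Complex.I ^ (quadForm A b y).val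
          * (-1 : ℂ) ^ (Bform A b w y).val := by
      rw [quadForm_add, I_pow_zmod4_add, I_pow_zmod4_add, I_pow_two_mul]
    have e3 : (starRingEnd ℂ) (f y)
        = (-1 : ℂ) ^ (ip z y).val * (-Complex.I) ^ (quadForm A b y).val := by
      rw [hf]; simp only [map_mul, map_pow, map_neg, map_one, Complex.conj_I]
    rw [hf]
    simp only []
    rw [e1, e2, e3]
    calc ((-1 : ℂ) ^ (ip z w).val * (-1 : ℂ) ^ (ip z y).val *
          (Complex.I ^ (quadForm A b w).val * Complex.I ^ (quadForm A b y).val *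
            (-1 : ℂ) ^ (Bform A b w y).val)) *
          ((-1 : ℂ) ^ (ip z y).val * (-Complex.I) ^ (quadForm A b y).val)
        = ((-1 : ℂ) ^ (ip z w).val * Complex.I ^ (quadForm A b w).val
            * (-1 : ℂ) ^ (Bform A b w y).val)
          * ((-1 : ℂ) ^ (ip z y).val * (-1 : ℂ) ^ (ip z y).val)
          * (Complex.I ^ (quadForm A b y).val * (-Complex.I) ^ (quadForm A b y).val) := by
          ring
      _ = _ := by rw [neg_one_sq_pow, I_negI_pow, mul_one, mul_one]
  -- inner character sum
  set S : (Fin n → ZMod 2) → ℂ :=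
    fun w => ∑ y ∈ KF, ((-1 : ℂ)) ^ (Bform A b w y).val with hS
  have hS0 : S 0 = (KF.card : ℂ) := by
    rw [hS]
    simp only [Bform_zero_left, ZMod.val_zero, pow_zero, Finset.sum_const, nsmul_eq_mul, mul_one]
  have hSne : ∀ w, w ∈ KF → w ≠ 0 → S w = 0 := by
    intro w hw hwne
    have hwK : w ∈ K := (memKF w).1 hw
    have hwnL : w ∉ Lset A b := by
      intro hwL
      exact hwne (by
        have : w ∈ Lset A b ∩ (K : Set (Fin n → ZMod 2)) := ⟨hwL, hwK⟩
        rw [hint] at this; exact this)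
    rw [mem_Lset_iff] at hwnL
    push_neg at hwnL
    obtain ⟨y0, hy0⟩ := hwnL
    obtain ⟨l, hl, k, hk, hy0eq⟩ := hsum y0
    have hBwl : Bform A b w l = 0 := by rw [Bform_comm]; exact (mem_Lset_iff A b l).1 hl w
    have hBwk : Bform A b w k = 1 := by
      have : Bform A b w y0 = Bform A b w l + Bform A b w k := by
        rw [hy0eq, Bform_add_right]
      rw [hBwl, zero_add] at this
      rw [this] at hy0
      generalize Bform A b w k = c at hy0 ⊢
      revert c; decide
    have hre := reindex k hk (fun y => ((-1 : ℂ)) ^ (Bform A b w y).val)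
    have hstep : ∀ y : Fin n → ZMod 2,
        ((-1 : ℂ)) ^ (Bform A b w (y + k)).val = -((-1 : ℂ)) ^ (Bform A b w y).val := by
      intro y
      rw [Bform_add_right, hBwk, neg_one_pow_zmod2_add]
      norm_num [show ZMod.val (1 : ZMod 2) = 1 from rfl]
    have hneg : S w = -S w := by
      conv_lhs => rw [hS]
      simp only []
      rw [hre]
      simp only [hstep]
      rw [Finset.sum_neg_distrib]
    linear_combination hneg / 2
  -- the main product identity
  have hGammadef : Gamma A b (K : Set (Fin n → ZMod 2)) z = ∑ x ∈ KF, f x := rfl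
  have hconj : (starRingEnd ℂ) (Gamma A b (K : Set (Fin n → ZMod 2)) z)
      = ∑ y ∈ KF, (starRingEnd ℂ) (f y) := by
    rw [hGammadef, map_sum]
  have key : Gamma A b (K : Set (Fin n → ZMod 2)) z
      * (starRingEnd ℂ) (Gamma A b (K : Set (Fin n → ZMod 2)) z) = (KF.card : ℂ) := by
    rw [hconj, hGammadef, Finset.sum_mul_sum, Finset.sum_comm]
    have step1 : ∀ y ∈ KF, ∑ x ∈ KF, f x * (starRingEnd ℂ) (f y)
        = ∑ w ∈ KF, ((-1 : ℂ) ^ (ip z w).val * Complex.I ^ (quadForm A b w).val)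
            * (-1 : ℂ) ^ (Bform A b w y).val := by
      intro y hy
      rw [reindex y ((memKF y).1 hy) (fun x => f x * (starRingEnd ℂ) (f y))]
      exact Finset.sum_congr rfl fun w _ => pointwise w y
    rw [Finset.sum_congr rfl step1, Finset.sum_comm]
    have step2 : ∀ w ∈ KF,
        (∑ y ∈ KF, ((-1 : ℂ) ^ (ip z w).val * Complex.I ^ (quadForm A b w).val)
            * (-1 : ℂ) ^ (Bform A b w y).val)
        = ((-1 : ℂ) ^ (ip z w).val * Complex.I ^ (quadForm A b w).val) * S w := by
      intro w _
      rw [hS, Finset.mul_sum]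
    rw [Finset.sum_congr rfl step2]
    have h0mem : (0 : Fin n → ZMod 2) ∈ KF := (memKF 0).2 K.zero_mem
    rw [Finset.sum_eq_single_of_mem 0 h0mem
      (fun w hw hne => by rw [hSne w hw hne, mul_zero])]
    rw [hS0, ip_zero, quadForm_zero]
    simp
  -- cardinalities
  have hcard : Nat.card ↥(Lset A b) * Nat.card ↥K = 2 ^ n := by
    have hfin : (Lset A b).Finite := Set.toFinite _
    have : Nat.card (↥(Lset A b) × ↥K) = Nat.card (Fin n → ZMod 2) := by
      apply Nat.card_eq_of_bijective (fun p => (p.1 : Fin n → ZMod 2) + (p.2 : Fin n → ZMod 2))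
      constructor
      · rintro ⟨⟨x1, hx1⟩, ⟨y1, hy1⟩⟩ ⟨⟨x2, hx2⟩, ⟨y2, hy2⟩⟩ heq
        simp only at heq
        have hd : x1 + x2 = y1 + y2 := by
          linear_combination heq + char2 x2 - char2 y1
        have hmem : x1 + x2 ∈ Lset A b ∩ (K : Set (Fin n → ZMod 2)) := by
          constructor
          · exact Lset_add A b hx1 hx2
          · rw [hd]; exact K.add_mem hy1 hy2
        rw [hint] at hmem
        have hx12 : x1 = x2 := by
          have h0 : x1 + x2 = 0 := hmem
          linear_combination h0 - char2 x2
        have hy12 : y1 = y2 := by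
          subst hx12
          exact add_left_cancel heq
        simp [hx12, hy12]
      · intro v
        obtain ⟨x, hx, y, hy, hv⟩ := hsum v
        exact ⟨⟨⟨x, hx⟩, ⟨y, hy⟩⟩, hv.symm⟩
    rw [Nat.card_prod] at this
    rw [this]
    simp [Nat.card_eq_fintype_card]
  have hKcard : KF.card = Nat.card ↥K := by
    rw [hKFdef, ← Set.ncard_eq_toFinset_card (K : Set (Fin n → ZMod 2)),
      ← Nat.card_coe_set_eq]
    rfl
  have hLpos : 0 < Nat.card ↥(Lset A b) := by
    have : Finite ↥(Lset A b) := (Set.toFinite (Lset A b)).to_subtype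
    have : Nonempty ↥(Lset A b) := ⟨⟨0, zero_mem_Lset A b⟩⟩
    exact Nat.card_pos
  -- finish
  have habs : (‖Gamma A b (K : Set (Fin n → ZMod 2)) z‖) ^ 2
      = (KF.card : ℝ) := by
    have h1 := Complex.sq_norm (Gamma A b (K : Set (Fin n → ZMod 2)) z)
    have h2 := Complex.mul_conj (Gamma A b (K : Set (Fin n → ZMod 2)) z)
    rw [key] at h2
    rw [h1]
    exact_mod_cast h2.symm
  rw [habs, hKcard]
  rw [eq_div_iff (by exact_mod_cast hLpos.ne' : (Nat.card ↥(Lset A b) : ℝ) ≠ 0)]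
  rw [mul_comm]
  exact_mod_cast hcard
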